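/- Let (aᵢ) be a nondecreasing finite sequence of nonnegative reals with a₀ = 0, and let q > 1. Then the discrete Stieltjes sum ∑_{i=0}^{n-1} aᵢ (a_{i+1}^{q-1} - aᵢ^{q-1}) is at most ((q-1)/q) · aₙ^q. -/

import Mathlib

lemma tele_aux (n : ℕ) (f : Fin (n + 1) → ℝ) :
    ∑ i : Fin n, (f i.succ - f i.castSucc) = f (Fin.last n) - f 0 := by
  induction n with
  | zero => simp
  | succ m ih =>
      rw [Fin.sum_univ_castSucc]
      have := ih (fun i => f i.castSucc)
      simp only [Fin.succ_castSucc] at *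
      rw [this, Fin.succ_last]
      have h0 : f (Fin.castSucc 0) = f 0 := rfl
      rw [h0]
      ring

theorem stmt_2 (n : ℕ) (a : Fin (n + 1) → ℝ) (ha : Monotone a) (h0 : a 0 = 0)
    (hnonneg : ∀ i, 0 ≤ a i) (q : ℝ) (hq : 1 < q) :
    ∑ i : Fin n, a i.castSucc * (a i.succ ^ (q - 1) - a i.castSucc ^ (q - 1)) ≤
      (q - 1) / q * a (Fin.last n) ^ q := by
  have hq0 : (0:ℝ) < q := by linarith
  have hq1 : (0:ℝ) < q - 1 := by linarith
  have hconj : q.HolderConjugate (q / (q - 1)) := Real.HolderConjugate.conjExponent hq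
  have key : ∀ i : Fin n,
      a i.castSucc * (a i.succ ^ (q - 1) - a i.castSucc ^ (q - 1)) ≤
        (q - 1) / q * (a i.succ ^ q - a i.castSucc ^ q) := by
    intro i
    set x := a i.castSucc with hx
    set y := a i.succ with hy
    have hxn : 0 ≤ x := hnonneg _
    have hyn : 0 ≤ y := hnonneg _
    have young := Real.young_inequality_of_nonneg hxn (Real.rpow_nonneg hyn (q-1)) hconj
    have hpow : (y ^ (q - 1)) ^ (q / (q - 1)) = y ^ q := by
      rw [← Real.rpow_mul hyn]
      congr 1
      field_simp
    rw [hpow] at young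
    have hdiv : y ^ q / (q / (q - 1)) = (q - 1) / q * y ^ q := by
      field_simp
    rw [hdiv] at young
    have hxq : x * x ^ (q - 1) = x ^ q := by
      have := Real.rpow_add_of_nonneg hxn (le_of_lt one_pos) (le_of_lt hq1)
      rw [Real.rpow_one] at this
      rw [← this]; norm_num
    have expand : x * (y ^ (q - 1) - x ^ (q - 1)) = x * y ^ (q - 1) - x ^ q := by
      rw [mul_sub, hxq]
    rw [expand]
    have : x * y ^ (q - 1) ≤ x ^ q / q + (q - 1) / q * y ^ q := young
    have hxqeq : x ^ q / q - x ^ q = -((q - 1) / q * x ^ q) := by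
      field_simp; ring
    linarith [this, hxqeq.ge]
  calc ∑ i : Fin n, a i.castSucc * (a i.succ ^ (q - 1) - a i.castSucc ^ (q - 1))
      ≤ ∑ i : Fin n, (q - 1) / q * (a i.succ ^ q - a i.castSucc ^ q) :=
        Finset.sum_le_sum fun i _ => key i
    _ = (q - 1) / q * ∑ i : Fin n, (a i.succ ^ q - a i.castSucc ^ q) := by
        rw [Finset.mul_sum]
    _ = (q - 1) / q * (a (Fin.last n) ^ q - a 0 ^ q) :=
        congrArg _ (tele_aux n fun j => a j ^ q)
    _ = (q - 1) / q * a (Fin.last n) ^ q := by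
        rw [h0, Real.zero_rpow (by linarith)]; ring
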